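/- Let G be a finite simple graph with a cut-edge e (a bridge). Then the nullity of the Helmholtzian matrix of G equals the nullity of the Helmholtzian matrix of the contraction G/e. -/

import Mathlib

open Matrix

/-- A finite simple graph together with arbitrary orientations on its edges
(indexed by `E`, each with a tail and a head) and on its triangles
(indexed by `T`, each given as a cyclic triple of vertices). -/
structure GraphData (V E T : Type*) where
  G : SimpleGraph V
  tail : E → V
  head : E → V
  tri1 : T → V
  tri2 : T → V
  tri3 : T → V
  edge_adj : ∀ e, G.Adj (tail e) (head e)
  edge_inj : ∀ e e' : E, s(tail e, head e) = s(tail e', head e') → e = e'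
  edge_surj : ∀ a b, G.Adj a b → ∃ e, s(tail e, head e) = s(a, b)
  tri_adj12 : ∀ τ, G.Adj (tri1 τ) (tri2 τ)
  tri_adj23 : ∀ τ, G.Adj (tri2 τ) (tri3 τ)
  tri_adj31 : ∀ τ, G.Adj (tri3 τ) (tri1 τ)
  tri_inj : ∀ τ τ' : T, ({tri1 τ, tri2 τ, tri3 τ} : Set V) = {tri1 τ', tri2 τ', tri3 τ'} → τ = τ'
  tri_surj : ∀ a b c, G.Adj a b → G.Adj b c → G.Adj c a →
    ∃ τ, ({tri1 τ, tri2 τ, tri3 τ} : Set V) = {a, b, c}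

variable {V E T : Type*}

/-- The signed edge-vertex incidence matrix `B`. -/
def Bmat [DecidableEq V] (D : GraphData V E T) : Matrix E V ℝ := fun e v =>
  if v = D.head e then 1 else if v = D.tail e then -1 else 0

/-- The signed triangle-edge incidence matrix `C`. -/
def Cmat [DecidableEq V] (D : GraphData V E T) : Matrix T E ℝ := fun τ e =>
  if (D.tail e, D.head e) = (D.tri1 τ, D.tri2 τ) ∨ (D.tail e, D.head e) = (D.tri2 τ, D.tri3 τ) ∨
      (D.tail e, D.head e) = (D.tri3 τ, D.tri1 τ) then 1
  else if (D.head e, D.tail e) = (D.tri1 τ, D.tri2 τ) ∨ (D.head e, D.tail e) = (D.tri2 τ, D.tri3 τ) ∨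
      (D.head e, D.tail e) = (D.tri3 τ, D.tri1 τ) then -1
  else 0

/-- The Helmholtzian matrix `H = B * Bᵀ + Cᵀ * C`. -/
def Hmat [DecidableEq V] [Fintype V] [Fintype T] (D : GraphData V E T) : Matrix E E ℝ :=
  Bmat D * (Bmat D)ᵀ + (Cmat D)ᵀ * Cmat D

/-- The nullity of the Helmholtzian matrix, i.e. the dimension of its kernel. -/
noncomputable def nullity [DecidableEq V] [Fintype V] [Fintype T] [Fintype E]
    (D : GraphData V E T) : ℕ :=
  Module.finrank ℝ ↥(LinearMap.ker (Hmat D).mulVecLin)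

/-- The edge `e` lies in the triangle `τ`. -/
def edgeInTri (D : GraphData V E T) (e : E) (τ : T) : Prop :=
  D.tail e ∈ ({D.tri1 τ, D.tri2 τ, D.tri3 τ} : Set V) ∧
  D.head e ∈ ({D.tri1 τ, D.tri2 τ, D.tri3 τ} : Set V)

/-- The triangle degree of an edge: the number of triangles containing it. -/
def triDeg [DecidableEq V] [Fintype T] (D : GraphData V E T) (e : E) : ℕ :=
  (Finset.univ.filter fun τ =>
    D.tail e ∈ ({D.tri1 τ, D.tri2 τ, D.tri3 τ} : Finset V) ∧
    D.head e ∈ ({D.tri1 τ, D.tri2 τ, D.tri3 τ} : Finset V)).card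

section FlowHelpers

open Finset

variable {V E T : Type*} [DecidableEq V] [Fintype E]

/-- The flow function associated to an edge vector. -/
def flow (D : GraphData V E T) (x : E → ℝ) (a b : V) : ℝ :=
  ∑ e, x e * ((if D.tail e = a ∧ D.head e = b then (1:ℝ) else 0)
      - (if D.tail e = b ∧ D.head e = a then (1:ℝ) else 0))

lemma flow_skew (D : GraphData V E T) (x : E → ℝ) (a b : V) :
    flow D x a b = - flow D x b a := by
  unfold flow
  rw [← Finset.sum_neg_distrib]
  refine Finset.sum_congr rfl fun e _ => by ring

lemma flow_add (D : GraphData V E T) (x y : E → ℝ) (a b : V) :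
    flow D (x + y) a b = flow D x a b + flow D y a b := by
  unfold flow
  rw [← Finset.sum_add_distrib]
  refine Finset.sum_congr rfl fun e _ => by simp [Pi.add_apply]; ring

lemma flow_smul (D : GraphData V E T) (c : ℝ) (x : E → ℝ) (a b : V) :
    flow D (c • x) a b = c * flow D x a b := by
  unfold flow
  rw [Finset.mul_sum]
  refine Finset.sum_congr rfl fun e _ => by simp [Pi.smul_apply]; ring

lemma flow_self (D : GraphData V E T) (x : E → ℝ) (a : V) :
    flow D x a a = 0 := by
  unfold flow
  refine Finset.sum_eq_zero fun e _ => by simp [and_comm]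

lemma flow_not_adj (D : GraphData V E T) (x : E → ℝ) {a b : V}
    (h : ¬ D.G.Adj a b) : flow D x a b = 0 := by
  unfold flow
  refine Finset.sum_eq_zero fun e _ => ?_
  have he := D.edge_adj e
  rw [if_neg, if_neg, sub_self, mul_zero]
  · rintro ⟨h1, h2⟩; exact h (h2 ▸ h1 ▸ he).symm
  · rintro ⟨h1, h2⟩; exact h (h1 ▸ h2 ▸ he)

lemma flow_ne_imp_adj (D : GraphData V E T) (x : E → ℝ) {a b : V}
    (h : flow D x a b ≠ 0) : D.G.Adj a b := by
  by_contra hc; exact h (flow_not_adj D x hc)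

lemma flow_tail_head (D : GraphData V E T) (x : E → ℝ) (e : E) :
    flow D x (D.tail e) (D.head e) = x e := by
  unfold flow
  rw [Finset.sum_eq_single e]
  · have hne := (D.edge_adj e).ne
    rw [if_pos ⟨rfl, rfl⟩, if_neg, sub_zero, mul_one]
    rintro ⟨h1, h2⟩; exact hne h1
  · intro e' _ hne
    rw [if_neg, if_neg, sub_self, mul_zero]
    · rintro ⟨h1, h2⟩
      exact hne (D.edge_inj e' e (by rw [h1, h2, Sym2.eq_swap]))
    · rintro ⟨h1, h2⟩
      exact hne (D.edge_inj e' e (by rw [h1, h2]))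
  · intro h; exact absurd (Finset.mem_univ e) h

/-- generic: flow of the edge with matching unordered pair -/
lemma flow_of_sym_eq (D : GraphData V E T) (x : E → ℝ) {e : E} {a b : V}
    (h : s(D.tail e, D.head e) = s(a, b)) :
    flow D x a b = x e ∨ flow D x a b = - x e := by
  rw [Sym2.eq_iff] at h
  rcases h with ⟨h1, h2⟩ | ⟨h1, h2⟩
  · left; rw [← h1, ← h2, flow_tail_head]
  · right; rw [← h2, ← h1] at *
    rw [flow_skew, flow_tail_head]

lemma div_eq (D : GraphData V E T) [Fintype V] (x : E → ℝ) (w : V) :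
    ((Bmat D)ᵀ *ᵥ x) w = ∑ a, flow D x a w := by
  unfold flow
  rw [Finset.sum_comm]
  unfold Matrix.mulVec dotProduct Bmat
  refine Finset.sum_congr rfl fun e _ => ?_
  rw [← Finset.mul_sum, Finset.sum_sub_distrib]
  simp only [ite_and, Finset.sum_ite_eq, Finset.mem_univ, if_true]
  have hne := (D.edge_adj e).ne
  rcases eq_or_ne (D.head e) w with h1 | h1
  · subst h1
    simp [Matrix.transpose, Matrix.transpose_apply, hne, Ne.symm hne]
  · rcases eq_or_ne (D.tail e) w with h2 | h2
    · subst h2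
      simp [Matrix.transpose, Matrix.transpose_apply, h1, Ne.symm h1]
    · simp [Matrix.transpose, Matrix.transpose_apply, h1, Ne.symm h1, h2, Ne.symm h2]

end FlowHelpers
section CurlHelpers

open Finset

variable {V E T : Type*} [DecidableEq V] [Fintype E]

lemma curl_eq (D : GraphData V E T) [Fintype T] (x : E → ℝ) (τ : T) :
    (Cmat D *ᵥ x) τ =
      flow D x (D.tri1 τ) (D.tri2 τ) + flow D x (D.tri2 τ) (D.tri3 τ)
        + flow D x (D.tri3 τ) (D.tri1 τ) := by
  unfold flow
  rw [← Finset.sum_add_distrib, ← Finset.sum_add_distrib]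
  unfold Matrix.mulVec dotProduct
  refine Finset.sum_congr rfl fun e _ => ?_
  have hne := (D.edge_adj e).ne
  have h12 := (D.tri_adj12 τ).ne
  have h23 := (D.tri_adj23 τ).ne
  have h31 := (D.tri_adj31 τ).ne
  unfold Cmat
  by_cases c1 : (D.tail e, D.head e) = (D.tri1 τ, D.tri2 τ)
  · simp only [Prod.mk.injEq] at c1; obtain ⟨e1, e2⟩ := c1
    simp [e1, e2, h12, h23, h31, Ne.symm h12, Ne.symm h23, Ne.symm h31]
  · by_cases c2 : (D.tail e, D.head e) = (D.tri2 τ, D.tri3 τ)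
    · simp only [Prod.mk.injEq] at c2; obtain ⟨e1, e2⟩ := c2
      simp [e1, e2, h12, h23, h31, Ne.symm h12, Ne.symm h23, Ne.symm h31]
    · by_cases c3 : (D.tail e, D.head e) = (D.tri3 τ, D.tri1 τ)
      · simp only [Prod.mk.injEq] at c3; obtain ⟨e1, e2⟩ := c3
        simp [e1, e2, h12, h23, h31, Ne.symm h12, Ne.symm h23, Ne.symm h31]
      · by_cases c4 : (D.head e, D.tail e) = (D.tri1 τ, D.tri2 τ)
        · simp only [Prod.mk.injEq] at c4; obtain ⟨e1, e2⟩ := c4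
          simp [e1, e2, h12, h23, h31, Ne.symm h12, Ne.symm h23, Ne.symm h31,
            c1, c2, c3]
        · by_cases c5 : (D.head e, D.tail e) = (D.tri2 τ, D.tri3 τ)
          · simp only [Prod.mk.injEq] at c5; obtain ⟨e1, e2⟩ := c5
            simp [e1, e2, h12, h23, h31, Ne.symm h12, Ne.symm h23, Ne.symm h31,
              c1, c2, c3]
          · by_cases c6 : (D.head e, D.tail e) = (D.tri3 τ, D.tri1 τ)
            · simp only [Prod.mk.injEq] at c6; obtain ⟨e1, e2⟩ := c6
              simp [e1, e2, h12, h23, h31, Ne.symm h12, Ne.symm h23, Ne.symm h31,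
                c1, c2, c3]
            · simp only [Prod.mk.injEq] at c1 c2 c3 c4 c5 c6
              beta_reduce
              simp only [Prod.mk.injEq]
              rw [if_neg (by tauto), if_neg (by tauto), if_neg (by tauto),
                if_neg (by tauto), if_neg (by tauto), if_neg (by tauto),
                if_neg (by tauto), if_neg (by tauto)]
              ring

/-- cyclic sum over equal vertex sets agrees up to sign -/
lemma cyc_of_set_eq {α : Type*} (h : α → α → ℝ) (hskew : ∀ a b, h a b = - h b a)
    {a b c x y z : α} (hab : a ≠ b) (hbc : b ≠ c) (hca : c ≠ a)
    (hs : ({a, b, c} : Set α) = {x, y, z}) :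
    h a b + h b c + h c a = h x y + h y z + h z x ∨
      h a b + h b c + h c a = -(h x y + h y z + h z x) := by
  have ha : a = x ∨ a = y ∨ a = z := by
    have : a ∈ ({x, y, z} : Set α) := hs ▸ (by simp)
    simpa using this
  have hb : b = x ∨ b = y ∨ b = z := by
    have : b ∈ ({x, y, z} : Set α) := hs ▸ (by simp)
    simpa using this
  have hc : c = x ∨ c = y ∨ c = z := by
    have : c ∈ ({x, y, z} : Set α) := hs ▸ (by simp)
    simpa using this
  rcases ha with rfl | rfl | rfl <;> rcases hb with rfl | rfl | rfl <;>
    rcases hc with rfl | rfl | rfl <;>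
      first
        | (exact absurd rfl hab)
        | (exact absurd rfl hbc)
        | (exact absurd rfl hca)
        | (left; ring1)
        | (right; linarith [hskew a b, hskew b c, hskew c a, hskew a c, hskew c b,
            hskew b a, hskew a a, hskew b b, hskew c c])

end CurlHelpers
section KerChar

open Finset

variable {V E T : Type*} [DecidableEq V] [Fintype V] [Fintype E] [Fintype T]

lemma dotProduct_self_nonneg' {n : Type*} [Fintype n] (v : n → ℝ) : 0 ≤ v ⬝ᵥ v :=
  Finset.sum_nonneg fun i _ => mul_self_nonneg (v i)

lemma mem_ker_iff (D : GraphData V E T) (x : E → ℝ) :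
    x ∈ LinearMap.ker (Hmat D).mulVecLin ↔
      (Bmat D)ᵀ *ᵥ x = 0 ∧ Cmat D *ᵥ x = 0 := by
  rw [LinearMap.mem_ker, Matrix.mulVecLin_apply]
  constructor
  · intro h
    have h0 : x ⬝ᵥ (Hmat D *ᵥ x) = 0 := by rw [h, dotProduct_zero]
    rw [Hmat, Matrix.add_mulVec, dotProduct_add, ← Matrix.mulVec_mulVec,
      ← Matrix.mulVec_mulVec, Matrix.dotProduct_mulVec x (Bmat D),
      Matrix.dotProduct_mulVec x (Cmat D)ᵀ, ← Matrix.mulVec_transpose,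
      Matrix.vecMul_transpose] at h0
    have n1 := dotProduct_self_nonneg' ((Bmat D)ᵀ *ᵥ x)
    have n2 := dotProduct_self_nonneg' (Cmat D *ᵥ x)
    constructor
    · rw [← dotProduct_self_eq_zero (v := (Bmat D)ᵀ *ᵥ x)]
      linarith
    · rw [← dotProduct_self_eq_zero (v := Cmat D *ᵥ x)]
      linarith
  · rintro ⟨h1, h2⟩
    rw [Hmat, Matrix.add_mulVec, ← Matrix.mulVec_mulVec, ← Matrix.mulVec_mulVec,
      h1, h2, Matrix.mulVec_zero, Matrix.mulVec_zero, add_zero]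

end KerChar
section BridgeFacts

open Finset SimpleGraph

variable {V : Type*}

lemma sym2_ne {u v a b : V} (h1 : ¬(a = u ∧ b = v)) (h2 : ¬(a = v ∧ b = u)) :
    s(a, b) ≠ s(u, v) := by
  intro hc; rw [Sym2.eq_iff] at hc; tauto

lemma bridge_adj {G : SimpleGraph V} {u v : V} (h : G.IsBridge s(u, v)) : u ≠ v := by
  intro huv; subst huv; exact (SimpleGraph.isBridge_iff.mp h) (SimpleGraph.Reachable.refl _)

lemma G2_adj {G : SimpleGraph V} (u v : V) {a b : V} (hab : G.Adj a b)
    (hne : s(a, b) ≠ s(u, v)) : (G \ SimpleGraph.fromEdgeSet {s(u, v)}).Adj a b := by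
  rw [SimpleGraph.sdiff_adj, SimpleGraph.fromEdgeSet_adj]
  exact ⟨hab, by simp [hne]⟩

lemma bridge_no_common {G : SimpleGraph V} {u v : V} (h : G.IsBridge s(u, v)) :
    ∀ w, G.Adj u w → G.Adj v w → False := by
  intro w h1 h2
  have huv : u ≠ v := bridge_adj h
  refine (SimpleGraph.isBridge_iff.mp h) ?_
  have r1 := (G2_adj u v h1 (sym2_ne (fun hc => (Ne.symm h2.ne) hc.2)
      (fun hc => huv hc.1))).reachable
  have r2 := (G2_adj u v h2.symm (sym2_ne (fun hc => (Ne.symm h1.ne) hc.1)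
      (fun hc => huv hc.2.symm))).reachable
  exact r1.trans r2

lemma bridge_no_path3 {G : SimpleGraph V} {u v : V} (h : G.IsBridge s(u, v)) :
    ∀ a b, a ≠ u → a ≠ v → b ≠ u → b ≠ v → G.Adj u a → G.Adj a b → G.Adj b v → False := by
  intro a b hau hav hbu hbv h1 h2 h3
  have huv : u ≠ v := bridge_adj h
  refine (SimpleGraph.isBridge_iff.mp h) ?_
  have r1 := (G2_adj u v h1 (sym2_ne (fun hc => hav hc.2) (fun hc => huv hc.1))).reachable
  have r2 := (G2_adj u v h2 (sym2_ne (fun hc => hbv hc.2) (fun hc => hav hc.1))).reachable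
  have r3 := (G2_adj u v h3 (sym2_ne (fun hc => hbu hc.1) (fun hc => huv hc.2.symm))).reachable
  exact (r1.trans r2).trans r3

lemma bridge_reach_iff {G : SimpleGraph V} {u v : V} (h : G.IsBridge s(u, v))
    {a b : V} (hab : G.Adj a b) (hne : s(a, b) ≠ s(u, v)) :
    ((G \ SimpleGraph.fromEdgeSet {s(u, v)}).Reachable u a ↔
      (G \ SimpleGraph.fromEdgeSet {s(u, v)}).Reachable u b) := by
  have hadj := (G2_adj u v hab hne)
  exact ⟨fun hr => hr.trans hadj.reachable, fun hr => hr.trans hadj.symm.reachable⟩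

lemma bridge_not_reach {G : SimpleGraph V} {u v : V} (h : G.IsBridge s(u, v)) :
    ¬ (G \ SimpleGraph.fromEdgeSet {s(u, v)}).Reachable u v :=
  (SimpleGraph.isBridge_iff).mp h

/-- generic cut lemma for skew functions -/
lemma cut_sum {α : Type*} [Fintype α] [DecidableEq α] (h : α → α → ℝ)
    (hskew : ∀ a b, h a b = - h b a) (S : Finset α) :
    ∑ b ∈ S, ∑ a : α, h a b = ∑ b ∈ S, ∑ a ∈ Sᶜ, h a b := by
  have hsplit : ∀ b, ∑ a : α, h a b = ∑ a ∈ S, h a b + ∑ a ∈ Sᶜ, h a b := by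
    intro b
    rw [← Finset.sum_add_sum_compl S]
  rw [Finset.sum_congr rfl fun b _ => hsplit b, Finset.sum_add_distrib]
  have hzero : ∑ b ∈ S, ∑ a ∈ S, h a b = 0 := by
    have h1 : ∑ b ∈ S, ∑ a ∈ S, h a b = - ∑ b ∈ S, ∑ a ∈ S, h a b := by
      conv_lhs => rw [Finset.sum_comm]
      rw [← Finset.sum_neg_distrib]
      refine Finset.sum_congr rfl fun a _ => ?_
      rw [← Finset.sum_neg_distrib]
      exact Finset.sum_congr rfl fun b _ => hskew a b
    linarith
  rw [hzero, zero_add]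

end BridgeFacts
section Transfer

open Finset

variable {V E T E' T' : Type*} [DecidableEq V] [Fintype V] [Fintype E] [Fintype T]
  [Fintype E'] [Fintype T']

/-- contraction projection -/
def pmap (u v : V) (hne : u ≠ v) : V → {x : V // x ≠ v} := fun w =>
  if h : w = v then ⟨u, hne⟩ else ⟨w, h⟩

lemma pmap_v (u v : V) (hne : u ≠ v) : pmap u v hne v = ⟨u, hne⟩ := dif_pos rfl

lemma pmap_of_ne (u v : V) (hne : u ≠ v) {w : V} (h : w ≠ v) :
    pmap u v hne w = ⟨w, h⟩ := dif_neg h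

lemma pmap_eq_iff (u v : V) (hne : u ≠ v) (a b : V) :
    pmap u v hne a = pmap u v hne b ↔ (a = b ∨ (a = u ∧ b = v) ∨ (a = v ∧ b = u)) := by
  unfold pmap
  split_ifs with h1 h2 h2 <;> simp [Subtype.ext_iff] <;> aesop

variable (D : GraphData V E T) (u v : V) (hne : u ≠ v)
  (D' : GraphData {x : V // x ≠ v} E' T')

/-- the forwarded flow function -/
def gfun (x : E → ℝ) (a' b' : {x : V // x ≠ v}) : ℝ :=
  flow D x (a' : V) (b' : V) + (if (a' : V) = u then flow D x v (b' : V) else 0)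
    + (if (b' : V) = u then flow D x (a' : V) v else 0)

/-- the forward linear transfer on edge vectors -/
def Fwd (x : E → ℝ) : E' → ℝ := fun e' => gfun D u v x (D'.tail e') (D'.head e')

/-- the backward linear transfer on edge vectors -/
def Bwd (y : E' → ℝ) : E → ℝ := fun e =>
  flow D' y (pmap u v hne (D.tail e)) (pmap u v hne (D.head e))

lemma gfun_skew (x : E → ℝ) (a' b' : {x : V // x ≠ v}) :
    gfun D u v x a' b' = - gfun D u v x b' a' := by
  unfold gfun
  split_ifs <;>
    linarith [flow_skew D x (a' : V) (b' : V), flow_skew D x v (b' : V),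
      flow_skew D x (a' : V) v, flow_skew D x v (a' : V), flow_skew D x (b' : V) v]

lemma gfun_self (x : E → ℝ) (a' : {x : V // x ≠ v}) :
    gfun D u v x a' a' = 0 := by
  unfold gfun
  split_ifs <;>
    simp [flow_self] <;> linarith [flow_skew D x v (a' : V)]

variable (hG' : ∀ a b : {x : V // x ≠ v}, D'.G.Adj a b ↔
      (a ≠ b ∧ (D.G.Adj (a : V) (b : V) ∨ ((a : V) = u ∧ D.G.Adj v (b : V)) ∨
        ((b : V) = u ∧ D.G.Adj (a : V) v))))

include hG' in
lemma fwd_flow (x : E → ℝ) (a' b' : {x : V // x ≠ v}) :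
    flow D' (Fwd D u v D' x) a' b' = gfun D u v x a' b' := by
  rcases eq_or_ne a' b' with rfl | hab
  · rw [flow_self, gfun_self]
  by_cases hadj : D'.G.Adj a' b'
  · obtain ⟨e', he'⟩ := D'.edge_surj a' b' hadj
    rw [Sym2.eq_iff] at he'
    rcases he' with ⟨h1, h2⟩ | ⟨h1, h2⟩
    · rw [← h1, ← h2, flow_tail_head]
      rfl
    · rw [flow_skew, ← h1, ← h2, flow_tail_head]
      show -(gfun D u v x (D'.tail e') (D'.head e')) = _
      rw [h1, h2, ← gfun_skew]
  · rw [flow_not_adj D' _ hadj]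
    have c1 : flow D x (a' : V) (b' : V) = 0 :=
      flow_not_adj _ _ (fun hA => hadj ((hG' a' b').mpr ⟨hab, Or.inl hA⟩))
    have c2 : (if (a' : V) = u then flow D x v (b' : V) else 0) = 0 := by
      split_ifs with h
      · exact flow_not_adj _ _ (fun hA => hadj ((hG' a' b').mpr ⟨hab, Or.inr (Or.inl ⟨h, hA⟩)⟩))
      · rfl
    have c3 : (if (b' : V) = u then flow D x (a' : V) v else 0) = 0 := by
      split_ifs with h
      · exact flow_not_adj _ _ (fun hA => hadj ((hG' a' b').mpr ⟨hab, Or.inr (Or.inr ⟨h, hA⟩)⟩))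
      · rfl
    unfold gfun
    rw [c1, c2, c3, add_zero, add_zero]

lemma bwd_flow_adj (y : E' → ℝ) {a b : V} (h : D.G.Adj a b) :
    flow D (Bwd D u v hne D' y) a b = flow D' y (pmap u v hne a) (pmap u v hne b) := by
  obtain ⟨e, he⟩ := D.edge_surj a b h
  rw [Sym2.eq_iff] at he
  rcases he with ⟨h1, h2⟩ | ⟨h1, h2⟩
  · rw [← h1, ← h2, flow_tail_head]
    rfl
  · rw [flow_skew, ← h1, ← h2, flow_tail_head]
    show -(flow D' y (pmap u v hne (D.tail e)) (pmap u v hne (D.head e))) = _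
    rw [h1, h2, ← flow_skew]

lemma bwd_flow_uv (y : E' → ℝ) :
    flow D (Bwd D u v hne D' y) u v = flow D' y (pmap u v hne u) (pmap u v hne v) := by
  by_cases h : D.G.Adj u v
  · exact bwd_flow_adj D u v hne D' y h
  · rw [flow_not_adj D _ h, pmap_of_ne u v hne hne, pmap_v, flow_self]

lemma bwd_flow_vu (y : E' → ℝ) :
    flow D (Bwd D u v hne D' y) v u = flow D' y (pmap u v hne v) (pmap u v hne u) := by
  by_cases h : D.G.Adj v u
  · exact bwd_flow_adj D u v hne D' y h
  · rw [flow_not_adj D _ h, pmap_of_ne u v hne hne, pmap_v, flow_self]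

end Transfer
section SumHelpers

open Finset

lemma sum_two_points {α : Type*} [Fintype α] [DecidableEq α] (d : α → ℝ) (u v : α)
    (huv : u ≠ v) (h0 : ∀ a, a ≠ u → a ≠ v → d a = 0) (hsum : d u + d v = 0) :
    ∑ a, d a = 0 := by
  have key : ∀ a, d a = (if a = u then d u else 0) + (if a = v then d v else 0) := by
    intro a
    by_cases h1 : a = u
    · subst h1; simp [huv]
    · by_cases h2 : a = v
      · subst h2; simp [Ne.symm huv]
      · simp [h1, h2, h0 a h1 h2]
  rw [Finset.sum_congr rfl fun a _ => key a, Finset.sum_add_distrib]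
  rw [Finset.sum_ite_eq' Finset.univ u (fun _ => d u),
    Finset.sum_ite_eq' Finset.univ v (fun _ => d v)]
  simpa using hsum

lemma curl_zero {V E T : Type*} [DecidableEq V] [Fintype E] [Fintype T]
    (D : GraphData V E T) {x : E → ℝ} (hx : Cmat D *ᵥ x = 0) {a b c : V}
    (h1 : D.G.Adj a b) (h2 : D.G.Adj b c) (h3 : D.G.Adj c a) :
    flow D x a b + flow D x b c + flow D x c a = 0 := by
  obtain ⟨τ, hτ⟩ := D.tri_surj a b c h1 h2 h3
  have h0 : flow D x (D.tri1 τ) (D.tri2 τ) + flow D x (D.tri2 τ) (D.tri3 τ)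
      + flow D x (D.tri3 τ) (D.tri1 τ) = 0 := by
    rw [← curl_eq]
    exact congrFun hx τ
  rcases cyc_of_set_eq (flow D x) (flow_skew D x) h1.ne h2.ne h3.ne hτ.symm with h | h
  · rw [h, h0]
  · rw [h, h0, neg_zero]

lemma sum_V' {V : Type*} [Fintype V] [DecidableEq V] (u v : V) (hne : u ≠ v)
    (F : {x : V // x ≠ v} → ℝ) :
    ∑ a' : {x : V // x ≠ v}, F a' = ∑ a : V, if a = v then 0 else F (pmap u v hne a) := by
  have h1 : ∑ a : V, (if a = v then 0 else F (pmap u v hne a)) =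
      ∑ a ∈ Finset.univ.filter (fun a : V => a ≠ v), F (pmap u v hne a) := by
    rw [Finset.sum_filter]
    refine Finset.sum_congr rfl fun a _ => ?_
    by_cases h : a = v <;> simp [h]
  rw [h1, Finset.sum_subtype (p := fun a : V => a ≠ v)
    (Finset.univ.filter (fun a : V => a ≠ v)) (fun a => by simp)
    (fun a => F (pmap u v hne a))]
  refine Finset.sum_congr rfl fun a' _ => ?_
  rw [pmap_of_ne u v hne a'.2]

end SumHelpers
section ForwardTransfer

open Finset

variable {V E T E' T' : Type*} [DecidableEq V] [Fintype V] [Fintype E] [Fintype T]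
  [Fintype E'] [Fintype T']
  (D : GraphData V E T) (u v : V) (hne : u ≠ v)
  (D' : GraphData {x : V // x ≠ v} E' T')
  (hG' : ∀ a b : {x : V // x ≠ v}, D'.G.Adj a b ↔
      (a ≠ b ∧ (D.G.Adj (a : V) (b : V) ∨ ((a : V) = u ∧ D.G.Adj v (b : V)) ∨
        ((b : V) = u ∧ D.G.Adj (a : V) v))))

include hG' hne in
lemma fwd_div (x : E → ℝ) (hdiv : ∀ w, ∑ a, flow D x a w = 0)
    (w' : {x : V // x ≠ v}) :
    ∑ a' : {x : V // x ≠ v}, flow D' (Fwd D u v D' x) a' w' = 0 := by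
  rw [Finset.sum_congr rfl fun a' _ => fwd_flow D u v D' hG' x a' w', sum_V' u v hne]
  by_cases hw : (w' : V) = u
  · have hterm : ∀ a : V, (if a = v then 0 else gfun D u v x (pmap u v hne a) w') =
        (flow D x a (w' : V) - (if a = v then flow D x v (w' : V) else 0))
          + (if a = u then flow D x v (w' : V) else 0) + flow D x a v := by
      intro a
      by_cases h : a = v
      · subst h
        rw [if_pos rfl, if_pos rfl, if_neg (Ne.symm hne), flow_self]
        ring
      · rw [if_neg h, if_neg h]
        unfold gfun
        rw [pmap_of_ne u v hne h]
        simp only [if_pos hw]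
        ring
    rw [Finset.sum_congr rfl fun a _ => hterm a, Finset.sum_add_distrib,
      Finset.sum_add_distrib, Finset.sum_sub_distrib,
      Finset.sum_ite_eq' Finset.univ v (fun _ => flow D x v (w' : V)),
      Finset.sum_ite_eq' Finset.univ u (fun _ => flow D x v (w' : V)),
      hdiv (w' : V), hdiv v]
    simp
  · have hterm : ∀ a : V, (if a = v then 0 else gfun D u v x (pmap u v hne a) w') =
        (flow D x a (w' : V) - (if a = v then flow D x v (w' : V) else 0))
          + (if a = u then flow D x v (w' : V) else 0) := by
      intro a
      by_cases h : a = v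
      · subst h
        rw [if_pos rfl, if_pos rfl, if_neg (Ne.symm hne)]
        ring
      · rw [if_neg h, if_neg h]
        unfold gfun
        rw [pmap_of_ne u v hne h]
        simp only [if_neg hw]
        ring
    rw [Finset.sum_congr rfl fun a _ => hterm a, Finset.sum_add_distrib,
      Finset.sum_sub_distrib,
      Finset.sum_ite_eq' Finset.univ v (fun _ => flow D x v (w' : V)),
      Finset.sum_ite_eq' Finset.univ u (fun _ => flow D x v (w' : V)),
      hdiv (w' : V)]
    simp

lemma bridge_flow_zero (hb : D.G.IsBridge s(u, v)) (x : E → ℝ)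
    (hdiv : ∀ w, ∑ a, flow D x a w = 0) : flow D x u v = 0 := by
  classical
  set G2 := D.G \ SimpleGraph.fromEdgeSet {s(u, v)} with hG2
  set S : Finset V := Finset.univ.filter (fun a => G2.Reachable u a) with hS
  have hcut := cut_sum (flow D x) (flow_skew D x) S
  rw [Finset.sum_congr rfl fun b _ => hdiv b, Finset.sum_const_zero] at hcut
  have huS : u ∈ S := Finset.mem_filter.mpr ⟨Finset.mem_univ u, SimpleGraph.Reachable.refl u⟩
  have hvS : v ∈ Sᶜ := by
    rw [Finset.mem_compl, hS, Finset.mem_filter]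
    push_neg
    intro _
    exact bridge_not_reach hb
  have hterm : ∀ b ∈ S, ∀ a ∈ Sᶜ, flow D x a b =
      if b = u ∧ a = v then flow D x v u else 0 := by
    intro b hbS a haS
    by_cases hc : b = u ∧ a = v
    · rw [if_pos hc, hc.1, hc.2]
    · rw [if_neg hc]
      by_contra hnz
      have hadj : D.G.Adj a b := flow_ne_imp_adj D x hnz
      have hUb : G2.Reachable u b := (Finset.mem_filter.mp hbS).2
      have hUa : ¬ G2.Reachable u a := by
        have := Finset.mem_compl.mp haS
        rw [hS, Finset.mem_filter] at this
        push_neg at this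
        exact this (Finset.mem_univ a)
      by_cases hs : s(a, b) = s(u, v)
      · rw [Sym2.eq_iff] at hs
        rcases hs with ⟨hs1, hs2⟩ | ⟨hs1, hs2⟩
        · exact hUa (by rw [hs1])
        · exact hc ⟨hs2, hs1⟩
      · exact hUa ((bridge_reach_iff hb hadj hs).mpr hUb)
  have hrhs : ∑ b ∈ S, ∑ a ∈ Sᶜ, flow D x a b = flow D x v u := by
    rw [Finset.sum_congr rfl fun b hb' => Finset.sum_congr rfl fun a ha' => hterm b hb' a ha']
    have hinner : ∀ b ∈ S, (∑ a ∈ Sᶜ, if b = u ∧ a = v then flow D x v u else 0) =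
        if b = u then flow D x v u else 0 := by
      intro b _
      by_cases hbu : b = u
      · rw [if_pos hbu]
        have : ∀ a ∈ Sᶜ, (if b = u ∧ a = v then flow D x v u else 0) =
            if a = v then flow D x v u else 0 := by
          intro a _
          by_cases hav : a = v <;> simp [hav, hbu]
        rw [Finset.sum_congr rfl this, Finset.sum_ite_eq' Sᶜ v (fun _ => flow D x v u),
          if_pos hvS]
      · rw [if_neg hbu]
        refine Finset.sum_eq_zero fun a _ => ?_
        rw [if_neg (fun hc => hbu hc.1)]
    rw [Finset.sum_congr rfl hinner, Finset.sum_ite_eq' S u (fun _ => flow D x v u),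
      if_pos huS]
  rw [hrhs] at hcut
  rw [flow_skew, ← hcut, neg_zero]

end ForwardTransfer
section ForwardCurl

open Finset

variable {V E T E' T' : Type*} [DecidableEq V] [Fintype V] [Fintype E] [Fintype T]
  [Fintype E'] [Fintype T']
  (D : GraphData V E T) (u v : V) (hne : u ≠ v)
  (D' : GraphData {x : V // x ≠ v} E' T')
  (hG' : ∀ a b : {x : V // x ≠ v}, D'.G.Adj a b ↔
      (a ≠ b ∧ (D.G.Adj (a : V) (b : V) ∨ ((a : V) = u ∧ D.G.Adj v (b : V)) ∨
        ((b : V) = u ∧ D.G.Adj (a : V) v))))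

include hG' in
lemma fwd_curl3 (hb : D.G.IsBridge s(u, v)) (x : E → ℝ) (hx : Cmat D *ᵥ x = 0)
    (a' b' c' : {x : V // x ≠ v}) (hbu : (b' : V) ≠ u) (hcu : (c' : V) ≠ u)
    (h1 : D'.G.Adj a' b') (h2 : D'.G.Adj b' c') (h3 : D'.G.Adj c' a') :
    gfun D u v x a' b' + gfun D u v x b' c' + gfun D u v x c' a' = 0 := by
  have hbv := b'.2
  have hcv := c'.2
  have hAB := ((hG' a' b').mp h1).2
  have hBC := ((hG' b' c').mp h2).2
  have hCA := ((hG' c' a').mp h3).2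
  have hBC' : D.G.Adj (b' : V) (c' : V) := by
    rcases hBC with h | ⟨h, _⟩ | ⟨h, _⟩
    · exact h
    · exact absurd h hbu
    · exact absurd h hcu
  unfold gfun
  by_cases hau : (a' : V) = u
  · simp only [if_pos hau, if_neg hbu, if_neg hcu, add_zero, zero_add]
    have hAB' : D.G.Adj (a' : V) (b' : V) ∨ D.G.Adj v (b' : V) := by
      rcases hAB with h | ⟨_, h⟩ | ⟨h, _⟩
      · exact Or.inl h
      · exact Or.inr h
      · exact absurd h hbu
    have hCA' : D.G.Adj (c' : V) (a' : V) ∨ D.G.Adj (c' : V) v := by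
      rcases hCA with h | ⟨h, _⟩ | ⟨_, h⟩
      · exact Or.inl h
      · exact absurd h hcu
      · exact Or.inr h
    rcases hAB' with hab | hvb <;> rcases hCA' with hca | hcv'
    · -- triangle u b c
      have e1 : ¬ D.G.Adj v (b' : V) := fun h =>
        bridge_no_common hb (b' : V) (hau ▸ hab) h
      have e2 : ¬ D.G.Adj (c' : V) v := fun h =>
        bridge_no_common hb (c' : V) (hau ▸ hca.symm) h.symm
      rw [flow_not_adj D x e1, flow_not_adj D x e2]
      have hc0 := curl_zero D hx hab hBC' hca
      linarith
    · exact (bridge_no_path3 hb (b' : V) (c' : V) hbu hbv hcu hcv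
        (hau ▸ hab) hBC' hcv').elim
    · exact (bridge_no_path3 hb (c' : V) (b' : V) hcu hcv hbu hbv
        (hau ▸ hca.symm) hBC'.symm hvb.symm).elim
    · -- triangle v b c
      have e1 : ¬ D.G.Adj (a' : V) (b' : V) := fun h =>
        bridge_no_common hb (b' : V) (hau ▸ h) hvb
      have e2 : ¬ D.G.Adj (c' : V) (a' : V) := fun h =>
        bridge_no_common hb (c' : V) (hau ▸ h.symm) hcv'.symm
      rw [flow_not_adj D x e1, flow_not_adj D x e2]
      have hc0 := curl_zero D hx hvb hBC' hcv'
      linarith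
  · simp only [if_neg hau, if_neg hbu, if_neg hcu, add_zero]
    have hab : D.G.Adj (a' : V) (b' : V) := by
      rcases hAB with h | ⟨h, _⟩ | ⟨h, _⟩
      · exact h
      · exact absurd h hau
      · exact absurd h hbu
    have hca : D.G.Adj (c' : V) (a' : V) := by
      rcases hCA with h | ⟨h, _⟩ | ⟨h, _⟩
      · exact h
      · exact absurd h hcu
      · exact absurd h hau
    exact curl_zero D hx hab hBC' hca

include hG' in
lemma fwd_curl (hb : D.G.IsBridge s(u, v)) (x : E → ℝ) (hx : Cmat D *ᵥ x = 0)
    (τ' : T') : (Cmat D' *ᵥ (Fwd D u v D' x)) τ' = 0 := by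
  rw [curl_eq, fwd_flow D u v D' hG', fwd_flow D u v D' hG', fwd_flow D u v D' hG']
  have h12 := D'.tri_adj12 τ'
  have h23 := D'.tri_adj23 τ'
  have h31 := D'.tri_adj31 τ'
  have n12 : (D'.tri1 τ' : V) ≠ (D'.tri2 τ' : V) := fun h => h12.ne (Subtype.ext h)
  have n23 : (D'.tri2 τ' : V) ≠ (D'.tri3 τ' : V) := fun h => h23.ne (Subtype.ext h)
  have n31 : (D'.tri3 τ' : V) ≠ (D'.tri1 τ' : V) := fun h => h31.ne (Subtype.ext h)
  by_cases c1 : (D'.tri1 τ' : V) = u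
  · exact fwd_curl3 D u v D' hG' hb x hx _ _ _
      (fun h => n12 (c1.trans h.symm)) (fun h => n31 (h.trans c1.symm)) h12 h23 h31
  · by_cases c2 : (D'.tri2 τ' : V) = u
    · have := fwd_curl3 D u v D' hG' hb x hx (D'.tri2 τ') (D'.tri3 τ') (D'.tri1 τ')
        (fun h => n23 (c2.trans h.symm)) c1 h23 h31 h12
      linarith
    · by_cases c3 : (D'.tri3 τ' : V) = u
      · have := fwd_curl3 D u v D' hG' hb x hx (D'.tri3 τ') (D'.tri1 τ') (D'.tri2 τ')
          c1 c2 h31 h12 h23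
        linarith
      · exact fwd_curl3 D u v D' hG' hb x hx _ _ _ c2 c3 h12 h23 h31

end ForwardCurl
section BackwardTransfer

open Finset

variable {V E T E' T' : Type*} [DecidableEq V] [Fintype V] [Fintype E] [Fintype T]
  [Fintype E'] [Fintype T']
  (D : GraphData V E T) (u v : V) (hne : u ≠ v)
  (D' : GraphData {x : V // x ≠ v} E' T')
  (hG' : ∀ a b : {x : V // x ≠ v}, D'.G.Adj a b ↔
      (a ≠ b ∧ (D.G.Adj (a : V) (b : V) ∨ ((a : V) = u ∧ D.G.Adj v (b : V)) ∨
        ((b : V) = u ∧ D.G.Adj (a : V) v))))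

include hG' in
lemma bwd_div (hb : D.G.IsBridge s(u, v)) (y : E' → ℝ)
    (hdiv' : ∀ w' : {x : V // x ≠ v}, ∑ a' : {x : V // x ≠ v}, flow D' y a' w' = 0)
    (w : V) : ∑ a, flow D (Bwd D u v hne D' y) a w = 0 := by
  classical
  set J : {x : V // x ≠ v} := ⟨u, hne⟩ with hJ
  set U : V → Prop := fun a => (D.G \ SimpleGraph.fromEdgeSet {s(u, v)}).Reachable u a
    with hU
  have hUu : U u := SimpleGraph.Reachable.refl u
  have hUv : ¬ U v := bridge_not_reach hb
  have hUiff : ∀ a b : V, D.G.Adj a b → s(a, b) ≠ s(u, v) → (U a ↔ U b) :=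
    fun a b h1 h2 => bridge_reach_iff hb h1 h2
  have hpu : pmap u v hne u = J := pmap_of_ne u v hne hne
  have hpv : pmap u v hne v = J := pmap_v u v hne
  -- divergence at the merged vertex
  have divu : ∑ a : V, (if a = v then 0 else flow D' y (pmap u v hne a) J) = 0 := by
    rw [← sum_V' u v hne (fun a' => flow D' y a' J)]; exact hdiv' J
  -- the cut argument in the contracted graph
  have cutzero : ∑ a : V,
      (if a = v then 0 else if U a then 0 else flow D' y (pmap u v hne a) J) = 0 := by
    set S : Finset {x : V // x ≠ v} := Finset.univ.filter (fun a' => U (a' : V)) with hS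
    have hcut := cut_sum (flow D' y) (flow_skew D' y) S
    rw [Finset.sum_congr rfl fun b' _ => hdiv' b', Finset.sum_const_zero] at hcut
    have huS : J ∈ S := Finset.mem_filter.mpr ⟨Finset.mem_univ J, hUu⟩
    have hterm : ∀ b' ∈ S, ∀ a' ∈ Sᶜ, flow D' y a' b' =
        if b' = J then flow D' y a' J else 0 := by
      intro b' hbS a' haS
      by_cases hbj : b' = J
      · rw [if_pos hbj, hbj]
      · rw [if_neg hbj]
        by_contra hnz
        have hadj' := flow_ne_imp_adj D' y hnz
        have hUb : U (b' : V) := (Finset.mem_filter.mp hbS).2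
        have hUa : ¬ U (a' : V) := by
          have := Finset.mem_compl.mp haS
          rw [hS, Finset.mem_filter] at this
          push_neg at this
          exact this (Finset.mem_univ a')
        rcases ((hG' a' b').mp hadj').2 with h | ⟨h, _⟩ | ⟨h, _⟩
        · refine hUa ((hUiff _ _ h (sym2_ne ?_ ?_)).mpr hUb)
          · exact fun hc => b'.2 hc.2
          · exact fun hc => a'.2 hc.1
        · exact hUa (by rw [h])
        · exact hbj (Subtype.ext h)
    have hrhs : ∑ b' ∈ S, ∑ a' ∈ Sᶜ, flow D' y a' b' = ∑ a' ∈ Sᶜ, flow D' y a' J := by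
      rw [Finset.sum_congr rfl fun b' hb' =>
        Finset.sum_congr rfl fun a' ha' => hterm b' hb' a' ha']
      have hinner : ∀ b' ∈ S, (∑ a' ∈ Sᶜ, if b' = J then flow D' y a' J else 0) =
          if b' = J then ∑ a' ∈ Sᶜ, flow D' y a' J else 0 := by
        intro b' _
        by_cases hbj : b' = J <;> simp [hbj]
      rw [Finset.sum_congr rfl hinner,
        Finset.sum_ite_eq' S J (fun _ => ∑ a' ∈ Sᶜ, flow D' y a' J), if_pos huS]
    rw [hrhs] at hcut
    have hcompl : ∑ a' ∈ Sᶜ, flow D' y a' J =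
        ∑ a' : {x : V // x ≠ v}, (if U (a' : V) then 0 else flow D' y a' J) := by
      rw [Finset.sum_ite, Finset.sum_const_zero, zero_add]
      congr 1
      ext a'
      simp [hS, Finset.mem_compl, Finset.mem_filter]
    have hVsum : ∑ a' : {x : V // x ≠ v}, (if U (a' : V) then 0 else flow D' y a' J) =
        ∑ a : V, (if a = v then 0 else if U a then 0 else flow D' y (pmap u v hne a) J) := by
      rw [sum_V' u v hne (fun a' => if U (a' : V) then 0 else flow D' y a' J)]
      refine Finset.sum_congr rfl fun a _ => ?_
      by_cases h : a = v
      · simp [h]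
      · rw [if_neg h, if_neg h, pmap_of_ne u v hne h]
    rw [hcompl, hVsum] at hcut
    exact hcut.symm
  -- now the three cases for the vertex w
  by_cases hwv : w = v
  · rw [hwv, ← cutzero]
    refine Finset.sum_congr rfl fun a _ => ?_
    by_cases hav : a = v
    · subst hav; rw [if_pos rfl, flow_self]
    · rw [if_neg hav]
      by_cases hau : a = u
      · rw [hau, if_pos hUu, bwd_flow_uv D u v hne D' y, hpu, hpv,
          flow_self]
      · by_cases hA : D.G.Adj a v
        · have hsne : s(a, v) ≠ s(u, v) :=
            sym2_ne (fun hc => hau hc.1) (fun hc => hav hc.1)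
          rw [if_neg (fun hUa => (hUiff a v hA hsne).mp hUa |> hUv),
            bwd_flow_adj D u v hne D' y hA, hpv]
        · rw [flow_not_adj D _ hA]
          by_cases hUa : U a
          · rw [if_pos hUa]
          · rw [if_neg hUa]
            by_contra hnz
            have hadj' := flow_ne_imp_adj D' y (fun hc => hnz hc.symm)
            rcases ((hG' _ _).mp hadj').2 with h | ⟨h, _⟩ | ⟨_, h⟩
            · rw [pmap_of_ne u v hne hav] at h
              have hsne : s(a, u) ≠ s(u, v) :=
                sym2_ne (fun hc => hau hc.1) (fun hc => hav hc.1)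
              exact hUa ((hUiff a u h hsne).mpr hUu)
            · rw [pmap_of_ne u v hne hav] at h
              exact hau h
            · rw [pmap_of_ne u v hne hav] at h
              exact hA h
  · by_cases hwu : w = u
    · rw [hwu]
      have key : ∀ a : V, flow D (Bwd D u v hne D' y) a u =
          (if a = v then 0 else flow D' y (pmap u v hne a) J)
            - (if a = v then 0 else if U a then 0 else flow D' y (pmap u v hne a) J) := by
        intro a
        by_cases hav : a = v
        · rw [hav, if_pos rfl, if_pos rfl,
            bwd_flow_vu D u v hne D' y, hpv, hpu, flow_self]
          ring
        · rw [if_neg hav, if_neg hav]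
          by_cases hau : a = u
          · rw [hau, flow_self, hpu, flow_self D' y J]
            simp
          · by_cases hA : D.G.Adj a u
            · have hsne : s(a, u) ≠ s(u, v) :=
                sym2_ne (fun hc => hne hc.2) (fun hc => hav hc.1)
              rw [if_pos ((hUiff a u hA hsne).mpr hUu),
                bwd_flow_adj D u v hne D' y hA, hpu]
              ring
            · rw [flow_not_adj D _ hA]
              by_cases hUa : U a
              · rw [if_pos hUa]
                have hF : flow D' y (pmap u v hne a) J = 0 := by
                  by_contra hnz
                  have hadj' := flow_ne_imp_adj D' y hnz
                  rcases ((hG' _ _).mp hadj').2 with h | ⟨h, _⟩ | ⟨_, h⟩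
                  · rw [pmap_of_ne u v hne hav] at h
                    exact hA h
                  · rw [pmap_of_ne u v hne hav] at h
                    exact hau h
                  · rw [pmap_of_ne u v hne hav] at h
                    have hsne : s(a, v) ≠ s(u, v) :=
                      sym2_ne (fun hc => hau hc.1) (fun hc => hav hc.1)
                    exact hUv ((hUiff a v h hsne).mp hUa)
                rw [hF]
                ring
              · rw [if_neg hUa]
                ring
      rw [Finset.sum_congr rfl fun a _ => key a, Finset.sum_sub_distrib, divu, cutzero]
      ring
    · -- w ∉ {u, v}
      have hdivw : ∑ a : V, (if a = v then 0 else
          flow D' y (pmap u v hne a) (pmap u v hne w)) = 0 := by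
        rw [← sum_V' u v hne (fun a' => flow D' y a' (pmap u v hne w))]
        exact hdiv' (pmap u v hne w)
      have hzero : ∑ a : V, (flow D (Bwd D u v hne D' y) a w -
          (if a = v then 0 else flow D' y (pmap u v hne a) (pmap u v hne w))) = 0 := by
        refine sum_two_points _ u v hne ?_ ?_
        · intro a hau hav
          rw [if_neg hav]
          by_cases hA : D.G.Adj a w
          · rw [bwd_flow_adj D u v hne D' y hA, sub_self]
          · rw [flow_not_adj D _ hA]
            have hF : flow D' y (pmap u v hne a) (pmap u v hne w) = 0 := by
              by_contra hnz
              have hadj' := flow_ne_imp_adj D' y hnz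
              rcases ((hG' _ _).mp hadj').2 with h | ⟨h, _⟩ | ⟨h, _⟩
              · rw [pmap_of_ne u v hne hav, pmap_of_ne u v hne hwv] at h
                exact hA h
              · rw [pmap_of_ne u v hne hav] at h
                exact hau h
              · rw [pmap_of_ne u v hne hwv] at h
                exact hwu h
            rw [hF, sub_zero]
        · have hd1 : flow D (Bwd D u v hne D' y) u w =
              (if D.G.Adj u w then flow D' y J (pmap u v hne w) else 0) := by
            by_cases hA : D.G.Adj u w
            · rw [if_pos hA, bwd_flow_adj D u v hne D' y hA, hpu]
            · rw [if_neg hA, flow_not_adj D _ hA]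
          have hd2 : flow D (Bwd D u v hne D' y) v w =
              (if D.G.Adj v w then flow D' y J (pmap u v hne w) else 0) := by
            by_cases hA : D.G.Adj v w
            · rw [if_pos hA, bwd_flow_adj D u v hne D' y hA, hpv]
            · rw [if_neg hA, flow_not_adj D _ hA]
          rw [hd1, hd2, if_neg hne, if_pos rfl, hpu]
          by_cases p1 : D.G.Adj u w <;> by_cases p2 : D.G.Adj v w
          · exact (bridge_no_common hb w p1 p2).elim
          · rw [if_pos p1, if_neg p2]; ring
          · rw [if_neg p1, if_pos p2]; ring
          · rw [if_neg p1, if_neg p2]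
            have hF : flow D' y J (pmap u v hne w) = 0 := by
              by_contra hnz
              have hadj' := flow_ne_imp_adj D' y hnz
              rcases ((hG' _ _).mp hadj').2 with h | ⟨_, h⟩ | ⟨h, _⟩
              · rw [pmap_of_ne u v hne hwv] at h
                exact p1 h
              · rw [pmap_of_ne u v hne hwv] at h
                exact p2 h
              · rw [pmap_of_ne u v hne hwv] at h
                exact hwu h
            rw [hF]; ring
      have := Finset.sum_sub_distrib (s := (Finset.univ : Finset V))
        (f := fun a => flow D (Bwd D u v hne D' y) a w)
        (g := fun a => if a = v then 0 else flow D' y (pmap u v hne a) (pmap u v hne w))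
      rw [this, hdivw, sub_zero] at hzero
      exact hzero

end BackwardTransfer
section BackwardCurl

open Finset

variable {V E T E' T' : Type*} [DecidableEq V] [Fintype V] [Fintype E] [Fintype T]
  [Fintype E'] [Fintype T']
  (D : GraphData V E T) (u v : V) (hne : u ≠ v)
  (D' : GraphData {x : V // x ≠ v} E' T')
  (hG' : ∀ a b : {x : V // x ≠ v}, D'.G.Adj a b ↔
      (a ≠ b ∧ (D.G.Adj (a : V) (b : V) ∨ ((a : V) = u ∧ D.G.Adj v (b : V)) ∨
        ((b : V) = u ∧ D.G.Adj (a : V) v))))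

include hG' in
lemma bwd_curl3 (hb : D.G.IsBridge s(u, v)) (y : E' → ℝ) (hy : Cmat D' *ᵥ y = 0)
    (a b c : V) (hbv : b ≠ v) (hcv : c ≠ v)
    (h1 : D.G.Adj a b) (h2 : D.G.Adj b c) (h3 : D.G.Adj c a) :
    flow D' y (pmap u v hne a) (pmap u v hne b)
      + flow D' y (pmap u v hne b) (pmap u v hne c)
      + flow D' y (pmap u v hne c) (pmap u v hne a) = 0 := by
  by_cases hav : a = v
  · have h1' : D.G.Adj v b := hav ▸ h1
    have h3' : D.G.Adj c v := hav ▸ h3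
    have hbu : b ≠ u := fun hbu =>
      bridge_no_common hb c (by rw [← hbu]; exact h2) h3'.symm
    have hcu : c ≠ u := fun hcu =>
      bridge_no_common hb b (by rw [← hcu]; exact h2.symm) h1'
    rw [hav, pmap_v, pmap_of_ne u v hne hbv, pmap_of_ne u v hne hcv]
    refine curl_zero D' hy ?_ ?_ ?_
    · exact (hG' _ _).mpr ⟨fun hc => hbu (congrArg Subtype.val hc).symm,
        Or.inr (Or.inl ⟨rfl, h1'⟩)⟩
    · exact (hG' _ _).mpr ⟨fun hc => h2.ne (congrArg Subtype.val hc), Or.inl h2⟩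
    · exact (hG' _ _).mpr ⟨fun hc => hcu (congrArg Subtype.val hc),
        Or.inr (Or.inr ⟨rfl, h3'⟩)⟩
  · rw [pmap_of_ne u v hne hav, pmap_of_ne u v hne hbv, pmap_of_ne u v hne hcv]
    refine curl_zero D' hy ?_ ?_ ?_
    · exact (hG' _ _).mpr ⟨fun hc => h1.ne (congrArg Subtype.val hc), Or.inl h1⟩
    · exact (hG' _ _).mpr ⟨fun hc => h2.ne (congrArg Subtype.val hc), Or.inl h2⟩
    · exact (hG' _ _).mpr ⟨fun hc => h3.ne (congrArg Subtype.val hc), Or.inl h3⟩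

include hG' in
lemma bwd_curl (hb : D.G.IsBridge s(u, v)) (y : E' → ℝ) (hy : Cmat D' *ᵥ y = 0)
    (τ : T) : (Cmat D *ᵥ (Bwd D u v hne D' y)) τ = 0 := by
  rw [curl_eq]
  have h12 := D.tri_adj12 τ
  have h23 := D.tri_adj23 τ
  have h31 := D.tri_adj31 τ
  rw [bwd_flow_adj D u v hne D' y h12, bwd_flow_adj D u v hne D' y h23,
    bwd_flow_adj D u v hne D' y h31]
  by_cases c1 : D.tri1 τ = v
  · exact bwd_curl3 D u v hne D' hG' hb y hy _ _ _
      (fun h => h12.ne (c1.trans h.symm)) (fun h => h31.ne (h.trans c1.symm)) h12 h23 h31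
  · by_cases c2 : D.tri2 τ = v
    · have := bwd_curl3 D u v hne D' hG' hb y hy (D.tri2 τ) (D.tri3 τ) (D.tri1 τ)
        (fun h => h23.ne (c2.trans h.symm)) c1 h23 h31 h12
      linarith
    · by_cases c3 : D.tri3 τ = v
      · have := bwd_curl3 D u v hne D' hG' hb y hy (D.tri3 τ) (D.tri1 τ) (D.tri2 τ)
          c1 c2 h31 h12 h23
        linarith
      · exact bwd_curl3 D u v hne D' hG' hb y hy _ _ _ c2 c3 h12 h23 h31

end BackwardCurl
section RoundTrips

open Finset

variable {V E T E' T' : Type*} [DecidableEq V] [Fintype V] [Fintype E] [Fintype T]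
  [Fintype E'] [Fintype T']
  (D : GraphData V E T) (u v : V) (hne : u ≠ v)
  (D' : GraphData {x : V // x ≠ v} E' T')
  (hG' : ∀ a b : {x : V // x ≠ v}, D'.G.Adj a b ↔
      (a ≠ b ∧ (D.G.Adj (a : V) (b : V) ∨ ((a : V) = u ∧ D.G.Adj v (b : V)) ∨
        ((b : V) = u ∧ D.G.Adj (a : V) v))))

include hG' in
lemma roundBF (hb : D.G.IsBridge s(u, v)) (x : E → ℝ)
    (hdiv : ∀ w, ∑ a, flow D x a w = 0) :
    Bwd D u v hne D' (Fwd D u v D' x) = x := by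
  funext e
  have hBe : Bwd D u v hne D' (Fwd D u v D' x) e =
      gfun D u v x (pmap u v hne (D.tail e)) (pmap u v hne (D.head e)) :=
    fwd_flow D u v D' hG' x _ _
  rw [hBe]
  have hadj := D.edge_adj e
  have hth : D.tail e ≠ D.head e := hadj.ne
  by_cases key : s(D.tail e, D.head e) = s(u, v)
  · have hx0 : flow D x u v = 0 := bridge_flow_zero D u v hb x hdiv
    rw [Sym2.eq_iff] at key
    rcases key with ⟨k1, k2⟩ | ⟨k1, k2⟩
    · rw [k1, k2, pmap_of_ne u v hne hne, pmap_v, gfun_self,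
        ← flow_tail_head D x e, k1, k2, hx0]
    · rw [k1, k2, pmap_v, pmap_of_ne u v hne hne, gfun_self,
        ← flow_tail_head D x e, k1, k2, flow_skew, hx0, neg_zero]
  · by_cases htv : D.tail e = v
    · have hhv : D.head e ≠ v := fun h => hth (htv.trans h.symm)
      have hhu : D.head e ≠ u := fun h => key (by rw [htv, h]; exact Sym2.eq_swap)
      rw [htv, pmap_v, pmap_of_ne u v hne hhv]
      unfold gfun
      rw [if_pos rfl, if_neg hhu]
      have hvhe : D.G.Adj v (D.head e) := htv ▸ hadj
      have hz1 : flow D x u (D.head e) = 0 :=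
        flow_not_adj _ _ (fun h => bridge_no_common hb _ h hvhe)
      have hz2 : flow D x v (D.head e) = x e := by
        have h0 := flow_tail_head D x e
        rw [htv] at h0
        exact h0
      rw [hz1, hz2]
      ring
    · by_cases hhv : D.head e = v
      · have htu : D.tail e ≠ u := fun h => key (by rw [h, hhv])
        rw [hhv, pmap_v, pmap_of_ne u v hne htv]
        unfold gfun
        rw [if_neg htu, if_pos rfl]
        have hav' : D.G.Adj (D.tail e) v := hhv ▸ hadj
        have hz1 : flow D x (D.tail e) u = 0 :=
          flow_not_adj _ _ (fun h => bridge_no_common hb _ h.symm hav'.symm)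
        have hz2 : flow D x (D.tail e) v = x e := by
          have h0 := flow_tail_head D x e
          rw [hhv] at h0
          exact h0
        rw [hz1, hz2]
        ring
      · rw [pmap_of_ne u v hne htv, pmap_of_ne u v hne hhv]
        unfold gfun
        have hz1 : (if (D.tail e) = u then flow D x v (D.head e) else 0) = 0 := by
          split_ifs with h
          · exact flow_not_adj _ _ (fun hA => bridge_no_common hb _ (h ▸ hadj) hA)
          · rfl
        have hz2 : (if (D.head e) = u then flow D x (D.tail e) v else 0) = 0 := by
          split_ifs with h
          · exact flow_not_adj _ _ (fun hA => bridge_no_common hb _ (h ▸ hadj).symm hA.symm)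
          · rfl
        rw [flow_tail_head D x e, hz1, hz2]
        ring

include hG' in
lemma roundFB (hb : D.G.IsBridge s(u, v)) (y : E' → ℝ) :
    Fwd D u v D' (Bwd D u v hne D' y) = y := by
  funext e'
  have hadj' := D'.edge_adj e'
  have hne' : D'.tail e' ≠ D'.head e' := hadj'.ne
  show gfun D u v (Bwd D u v hne D' y) (D'.tail e') (D'.head e') = y e'
  set a' := D'.tail e' with ha'
  set b' := D'.head e' with hb'
  have hy' : flow D' y a' b' = y e' := flow_tail_head D' y e'
  have hpa : pmap u v hne (a' : V) = a' := by
    rw [pmap_of_ne u v hne a'.2]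
  have hpb : pmap u v hne (b' : V) = b' := by
    rw [pmap_of_ne u v hne b'.2]
  rcases ((hG' a' b').mp hadj').2 with hAB | ⟨hau, hvb⟩ | ⟨hbu, hav⟩
  · unfold gfun
    rw [bwd_flow_adj D u v hne D' y hAB, hpa, hpb, hy']
    have hz1 : (if (a' : V) = u then flow D (Bwd D u v hne D' y) v (b' : V) else 0) = 0 := by
      split_ifs with h
      · exact flow_not_adj _ _ (fun hA => bridge_no_common hb _ (h ▸ hAB) hA)
      · rfl
    have hz2 : (if (b' : V) = u then flow D (Bwd D u v hne D' y) (a' : V) v else 0) = 0 := by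
      split_ifs with h
      · exact flow_not_adj _ _ (fun hA => bridge_no_common hb _ (h ▸ hAB).symm hA.symm)
      · rfl
    rw [hz1, hz2]
    ring
  · have hnAB : ¬ D.G.Adj (a' : V) (b' : V) := fun h =>
      bridge_no_common hb (b' : V) (hau ▸ h) hvb
    have ha'J : (⟨u, hne⟩ : {x : V // x ≠ v}) = a' := Subtype.ext hau.symm
    unfold gfun
    rw [flow_not_adj D _ hnAB, if_pos hau,
      bwd_flow_adj D u v hne D' y hvb, pmap_v, ha'J, hpb, hy',
      if_neg (fun h : (b' : V) = u => hne' (Subtype.ext (hau.trans h.symm)))]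
    ring
  · have hnAB : ¬ D.G.Adj (a' : V) (b' : V) := fun h =>
      bridge_no_common hb (a' : V) (hbu ▸ h).symm hav.symm
    have hb'J : (⟨u, hne⟩ : {x : V // x ≠ v}) = b' := Subtype.ext hbu.symm
    unfold gfun
    rw [flow_not_adj D _ hnAB,
      if_neg (fun h : (a' : V) = u => hne' (Subtype.ext (h.trans hbu.symm))),
      if_pos hbu, bwd_flow_adj D u v hne D' y hav, pmap_v, hb'J, hpa, hy']
    ring

end RoundTrips
section Assembly

open Finset

variable {V E T E' T' : Type*} [DecidableEq V] [Fintype V] [Fintype E] [Fintype T]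
  [Fintype E'] [Fintype T']
  (D : GraphData V E T) (u v : V) (hne : u ≠ v)
  (D' : GraphData {x : V // x ≠ v} E' T')

lemma fwd_add' (x y : E → ℝ) :
    Fwd D u v D' (x + y) = Fwd D u v D' x + Fwd D u v D' y := by
  funext e'
  show gfun D u v (x + y) _ _ = gfun D u v x _ _ + gfun D u v y _ _
  unfold gfun
  rw [flow_add, flow_add, flow_add]
  split_ifs <;> ring

lemma fwd_smul' (c : ℝ) (x : E → ℝ) :
    Fwd D u v D' (c • x) = c • Fwd D u v D' x := by
  funext e'
  show gfun D u v (c • x) _ _ = c * gfun D u v x _ _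
  unfold gfun
  rw [flow_smul, flow_smul, flow_smul]
  split_ifs <;> ring

lemma bwd_add' (x y : E' → ℝ) :
    Bwd D u v hne D' (x + y) = Bwd D u v hne D' x + Bwd D u v hne D' y := by
  funext e
  show flow D' (x + y) _ _ = flow D' x _ _ + flow D' y _ _
  rw [flow_add]

lemma bwd_smul' (c : ℝ) (x : E' → ℝ) :
    Bwd D u v hne D' (c • x) = c • Bwd D u v hne D' x := by
  funext e
  show flow D' (c • x) _ _ = c * flow D' x _ _
  rw [flow_smul]

end Assembly

theorem helmholtzian_nullity_bridge_contraction' {V E T E' T' : Type*}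
    [DecidableEq V] [Fintype V] [Fintype E] [Fintype T] [Fintype E'] [Fintype T']
    (D : GraphData V E T) (u v : V) (hbridge : D.G.IsBridge s(u, v))
    (D' : GraphData {x : V // x ≠ v} E' T')
    (hG' : ∀ a b : {x : V // x ≠ v}, D'.G.Adj a b ↔
      (a ≠ b ∧ (D.G.Adj (a : V) (b : V) ∨ ((a : V) = u ∧ D.G.Adj v (b : V)) ∨
        ((b : V) = u ∧ D.G.Adj (a : V) v)))) :
    nullity D = nullity D' := by
  classical
  have hne : u ≠ v := bridge_adj hbridge
  have memF : ∀ x : E → ℝ, x ∈ LinearMap.ker (Hmat D).mulVecLin →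
      Fwd D u v D' x ∈ LinearMap.ker (Hmat D').mulVecLin := by
    intro x hx
    rw [mem_ker_iff] at hx ⊢
    obtain ⟨h1, h2⟩ := hx
    have hdiv : ∀ w, ∑ a, flow D x a w = 0 := fun w => by
      rw [← div_eq]; exact congrFun h1 w
    constructor
    · funext w'
      rw [div_eq]
      exact fwd_div D u v hne D' hG' x hdiv w'
    · funext τ'
      exact fwd_curl D u v D' hG' hbridge x h2 τ'
  have memB : ∀ y : E' → ℝ, y ∈ LinearMap.ker (Hmat D').mulVecLin →
      Bwd D u v hne D' y ∈ LinearMap.ker (Hmat D).mulVecLin := by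
    intro y hy
    rw [mem_ker_iff] at hy ⊢
    obtain ⟨h1, h2⟩ := hy
    have hdiv' : ∀ w' : {x : V // x ≠ v}, ∑ a' : {x : V // x ≠ v}, flow D' y a' w' = 0 :=
      fun w' => by rw [← div_eq]; exact congrFun h1 w'
    constructor
    · funext w
      rw [div_eq]
      exact bwd_div D u v hne D' hG' hbridge y hdiv' w
    · funext τ
      exact bwd_curl D u v hne D' hG' hbridge y h2 τ
  have hdiv_of : ∀ x : ↥(LinearMap.ker (Hmat D).mulVecLin), ∀ w,
      ∑ a, flow D (x : E → ℝ) a w = 0 := by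
    intro x w
    rw [← div_eq]
    exact congrFun ((mem_ker_iff D _).mp x.2).1 w
  let eqv : ↥(LinearMap.ker (Hmat D).mulVecLin) ≃ₗ[ℝ]
      ↥(LinearMap.ker (Hmat D').mulVecLin) :=
  { toFun := fun x => ⟨Fwd D u v D' (x : E → ℝ), memF _ x.2⟩
    map_add' := fun x y => Subtype.ext (fwd_add' D u v D' (x : E → ℝ) (y : E → ℝ))
    map_smul' := fun c x => Subtype.ext (fwd_smul' D u v D' c (x : E → ℝ))
    invFun := fun y => ⟨Bwd D u v hne D' (y : E' → ℝ), memB _ y.2⟩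
    left_inv := fun x => Subtype.ext
      (roundBF D u v hne D' hG' hbridge (x : E → ℝ) (hdiv_of x))
    right_inv := fun y => Subtype.ext (roundFB D u v hne D' hG' hbridge (y : E' → ℝ)) }
  exact LinearEquiv.finrank_eq eqv

theorem helmholtzian_nullity_bridge_contraction {V E T E' T' : Type*}
    [DecidableEq V] [Fintype V] [Fintype E] [Fintype T] [Fintype E'] [Fintype T']
    (D : GraphData V E T) (u v : V) (hbridge : D.G.IsBridge s(u, v))
    (D' : GraphData {x : V // x ≠ v} E' T')
    (hG' : ∀ a b : {x : V // x ≠ v}, D'.G.Adj a b ↔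
      (a ≠ b ∧ (D.G.Adj (a : V) (b : V) ∨ ((a : V) = u ∧ D.G.Adj v (b : V)) ∨
        ((b : V) = u ∧ D.G.Adj (a : V) v)))) :
    nullity D = nullity D' :=
  helmholtzian_nullity_bridge_contraction' D u v hbridge D' hG'
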